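/- For every positive integer a, the sequence \left\{ \frac{1}{(k+a)\, k!} \right\}_{k=0}^{\infty} is a multiplier sequence. -/

import Mathlib

/-- The polynomial obtained by applying the sequence `γ` coefficientwise:
`T[∑ aₖ xᵏ] = ∑ γₖ aₖ xᵏ`. -/
noncomputable def applySeq (γ : ℕ → ℝ) (p : Polynomial ℝ) : Polynomial ℝ :=
  ∑ k ∈ Finset.range (p.natDegree + 1), Polynomial.C (γ k * p.coeff k) * Polynomial.X ^ k

/-- A real polynomial has only real roots (over `ℂ`). -/
def RealRooted (p : Polynomial ℝ) : Prop :=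
  ∀ z : ℂ, Polynomial.aeval z p = 0 → z.im = 0

/-- A classical multiplier sequence. -/
def IsMultiplierSequence (γ : ℕ → ℝ) : Prop :=
  ∀ p : Polynomial ℝ, RealRooted p → RealRooted (applySeq γ p)

open Polynomial Set Finset

section Lemmas

lemma rr_ne_zero {p : ℝ[X]} (h : RealRooted p) : p ≠ 0 := by
  rintro rfl
  simpa using h Complex.I (by simp)

lemma rr_of_card {p : ℝ[X]} (hp : p ≠ 0) (h : p.natDegree ≤ Multiset.card p.roots + 1) :
    RealRooted p := by
  obtain ⟨q, hpq, hdeg, hroots⟩ := p.exists_prod_multiset_X_sub_C_mul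
  have hq0 : q ≠ 0 := by rintro rfl; simp at hpq; exact hp hpq.symm
  have hq1 : q.natDegree ≤ 1 := by omega
  have hqdeg : q.natDegree = 0 := by
    rcases Nat.lt_or_ge q.natDegree 1 with h1 | h1
    · omega
    have h1' : q.natDegree = 1 := le_antisymm hq1 h1
    exfalso
    obtain ⟨A, B, hA, hAB⟩ : ∃ A B : ℝ, A ≠ 0 ∧ q = C A * X + C B := by
      refine ⟨q.coeff 1, q.coeff 0, ?_, ?_⟩
      · exact coeff_ne_zero_of_eq_degree (by simp [degree_eq_natDegree hq0, h1'])
      · exact eq_X_add_C_of_natDegree_le_one hq1 ▸ rfl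
    have : (-B / A) ∈ q.roots := by
      rw [mem_roots hq0]
      simp [hAB, IsRoot, hA]
      field_simp
      ring
    rw [hroots] at this
    simp at this
  obtain ⟨c, rfl⟩ := natDegree_eq_zero.mp hqdeg
  have hc : c ≠ 0 := by rintro rfl; simp at hq0
  intro z hz
  rw [← hpq] at hz
  rw [map_mul, map_multiset_prod] at hz
  rcases mul_eq_zero.mp hz with h0 | h0
  · rw [Multiset.map_map] at h0
    have h0' : (0 : ℂ) ∈ Multiset.map (⇑(aeval z) ∘ fun a => X - C a) p.roots :=
      Multiset.prod_eq_zero_iff.mp h0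
    obtain ⟨x, hx, hx0⟩ := Multiset.mem_map.mp h0'
    simp only [Function.comp_apply, map_sub, aeval_X, aeval_C] at hx0
    have hz' : z = ((x : ℝ) : ℂ) := by simpa using sub_eq_zero.mp hx0
    rw [hz']
    simp
  · simp [hc] at h0

lemma rr_card {p : ℝ[X]} (hp : p ≠ 0) (h : RealRooted p) :
    Multiset.card p.roots = p.natDegree := by
  refine le_antisymm (p.card_roots' ) ?_
  generalize hn : p.natDegree = n
  induction n using Nat.strong_induction_on generalizing p with
  | _ n IH =>
    rcases Nat.eq_zero_or_pos n with rfl | hpos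
    · exact Nat.zero_le _
    have hmapdeg : (p.map (algebraMap ℝ ℂ)).natDegree = n := by
      rw [natDegree_map, hn]
    have hdegpos : 0 < (p.map (algebraMap ℝ ℂ)).degree := by
      rw [← natDegree_pos_iff_degree_pos, hmapdeg]; exact hpos
    obtain ⟨z, hz⟩ := Complex.exists_root hdegpos
    have hz' : (aeval z) p = 0 := by
      rwa [aeval_def, ← eval_map]
    have him := h z hz'
    set x := z.re with hx
    have hzx : z = (x : ℂ) := Complex.ext rfl (by simp [him])
    have hroot : p.eval x = 0 := by
      have : aeval ((algebraMap ℝ ℂ) x) p = (algebraMap ℝ ℂ) (p.eval x) := by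
        rw [aeval_def, eval₂_at_apply]
      rw [hzx] at hz'
      have h2 : (algebraMap ℝ ℂ) (p.eval x) = 0 := by rw [← this]; exact hz'
      simpa using h2
    obtain ⟨p₁, rfl⟩ := (dvd_iff_isRoot.mpr hroot)
    have hp₁ : p₁ ≠ 0 := by rintro rfl; simp at hp
    have hXx : (X - C x : ℝ[X]) ≠ 0 := X_sub_C_ne_zero x
    have hdeg1 : p₁.natDegree = n - 1 := by
      have := natDegree_mul hXx hp₁
      rw [hn] at this
      simp [natDegree_X_sub_C] at this
      omega
    have hrr₁ : RealRooted p₁ := by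
      intro w hw
      exact h w (by rw [map_mul] at *; rw [hw, mul_zero])
    have hcard₁ : n - 1 ≤ Multiset.card p₁.roots := IH (n-1) (by omega) hp₁ hrr₁ hdeg1
    rw [roots_mul (mul_ne_zero hXx hp₁), roots_X_sub_C]
    simp
    omega

lemma rr_deriv {p : ℝ[X]} (h : RealRooted p) (hd : 0 < p.natDegree) :
    RealRooted (derivative p) ∧ (derivative p).natDegree = p.natDegree - 1 ∧
      derivative p ≠ 0 := by
  have hp : p ≠ 0 := by rintro rfl; simp at hd
  have hdeg : (derivative p).degree = ((p.natDegree - 1 : ℕ) : WithBot ℕ) :=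
    degree_derivative_eq p hd
  have hne : derivative p ≠ 0 := by
    intro h0; rw [h0, degree_zero] at hdeg; exact (by simp at hdeg)
  have hnd : (derivative p).natDegree = p.natDegree - 1 := natDegree_eq_of_degree_eq_some hdeg
  have hcard := p.card_roots_le_derivative
  rw [rr_card hp h] at hcard
  refine ⟨rr_of_card hne (by omega), hnd, hne⟩

lemma multB (p : ℝ[X]) (r : ℝ) (hq : derivative p - C r * p ≠ 0) (x : ℝ) :
    p.rootMultiplicity x - 1 ≤ (derivative p - C r * p).rootMultiplicity x := by
  by_cases hp : p = 0
  · simp [hp]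
  have h1 : (X - C x) ^ (p.rootMultiplicity x - 1) ∣ derivative p := by
    by_cases hd : derivative p = 0
    · exact hd ▸ dvd_zero _
    exact dvd_trans (pow_dvd_pow _
      (p.rootMultiplicity_sub_one_le_derivative_rootMultiplicity x))
      (pow_rootMultiplicity_dvd _ x)
  have h2 : (X - C x) ^ (p.rootMultiplicity x - 1) ∣ C r * p :=
    Dvd.dvd.mul_left
      (dvd_trans (pow_dvd_pow _ (Nat.sub_le _ _)) (pow_rootMultiplicity_dvd p x)) _
  exact (le_rootMultiplicity_iff hq).mpr (dvd_sub h1 h2)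

lemma interleaveB (p : ℝ[X]) (r : ℝ) (hp : p ≠ 0) (hq : derivative p - C r * p ≠ 0) :
    p.roots.toFinset.card ≤
      ((derivative p - C r * p).roots.toFinset \ p.roots.toFinset).card + 1 := by
  refine Finset.card_le_diff_of_interleaved fun x hx y hy hxy hxy' => ?_
  rw [Multiset.mem_toFinset, mem_roots hp] at hx hy
  set f : ℝ → ℝ := fun t => Real.exp (-r * t) * p.eval t with hf
  have hder : ∀ t : ℝ, HasDerivAt f
      ((-r * Real.exp (-r * t)) * p.eval t + Real.exp (-r * t) * (derivative p).eval t) t := by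
    intro t
    have h1 : HasDerivAt (fun s : ℝ => Real.exp (-r * s)) (-r * Real.exp (-r * t)) t := by
      have := ((hasDerivAt_id t).const_mul (-r)).exp
      simpa [mul_comm] using this
    have h2 := p.hasDerivAt t
    exact h1.mul h2
  have hcont : ContinuousOn f (Icc x y) :=
    (Continuous.mul (by continuity) (p.continuous_aeval)).continuousOn
  have hx0 : p.eval x = 0 := hx
  have hy0 : p.eval y = 0 := hy
  obtain ⟨z, hz1, hz2⟩ := exists_deriv_eq_zero hxy hcont (by simp [hf, hx0, hy0])
  refine ⟨z, ?_, hz1.1, hz1.2⟩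
  rw [Multiset.mem_toFinset, mem_roots hq]
  have hdz := (hder z).deriv
  rw [hz2] at hdz
  have hexp : Real.exp (-r * z) ≠ 0 := Real.exp_ne_zero _
  show (derivative p - C r * p).IsRoot z
  have h00 : Real.exp (-r * z) * ((derivative p).eval z - r * p.eval z) = 0 := by
    rw [hdz]; ring
  have h0 := (mul_eq_zero.mp h00).resolve_left hexp
  show (derivative p - C r * p).eval z = 0
  rw [eval_sub, eval_mul, eval_C]
  linarith

lemma card_roots_le_sub (p : ℝ[X]) (r : ℝ) (hp : p ≠ 0)
    (hq : derivative p - C r * p ≠ 0) :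
    Multiset.card p.roots ≤ Multiset.card (derivative p - C r * p).roots + 1 := by
  set q := derivative p - C r * p with hqdef
  calc
    Multiset.card p.roots = ∑ x ∈ p.roots.toFinset, p.roots.count x :=
      (Multiset.toFinset_sum_count_eq _).symm
    _ = ∑ x ∈ p.roots.toFinset, (p.roots.count x - 1 + 1) :=
      (Eq.symm <| Finset.sum_congr rfl fun _ hx => tsub_add_cancel_of_le <|
        Nat.succ_le_iff.2 <| Multiset.count_pos.2 <| Multiset.mem_toFinset.1 hx)
    _ = (∑ x ∈ p.roots.toFinset, (p.rootMultiplicity x - 1)) + p.roots.toFinset.card := by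
      simp only [Finset.sum_add_distrib, Finset.card_eq_sum_ones, count_roots]
    _ ≤ (∑ x ∈ p.roots.toFinset, q.rootMultiplicity x) +
          ((q.roots.toFinset \ p.roots.toFinset).card + 1) :=
      (add_le_add
        (Finset.sum_le_sum fun x _ => multB p r hq x)
        (interleaveB p r hp hq))
    _ ≤ (∑ x ∈ p.roots.toFinset, q.roots.count x) +
          ((∑ x ∈ q.roots.toFinset \ p.roots.toFinset,
            q.roots.count x) + 1) := by
      simp only [← count_roots]
      refine add_le_add_right (add_le_add_left ((Finset.card_eq_sum_ones _).trans_le ?_) _) _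
      refine Finset.sum_le_sum fun x hx => Nat.succ_le_iff.2 <| ?_
      rw [Multiset.count_pos, ← Multiset.mem_toFinset]
      exact (Finset.mem_sdiff.1 hx).1
    _ = Multiset.card q.roots + 1 := by
      rw [← add_assoc, ← Finset.sum_union Finset.disjoint_sdiff, Finset.union_sdiff_self_eq_union,
        ← Multiset.toFinset_sum_count_eq, ← Finset.sum_subset Finset.subset_union_right]
      intro x _ hx₂
      simpa only [Multiset.mem_toFinset, Multiset.count_eq_zero] using hx₂

lemma rr_sub {p : ℝ[X]} (h : RealRooted p) (hp : p ≠ 0) {r : ℝ} (hr : r ≠ 0) :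
    RealRooted (derivative p - C r * p) ∧
      (derivative p - C r * p).natDegree = p.natDegree ∧ derivative p - C r * p ≠ 0 := by
  have hCrp : degree (C r * p) = degree p := by
    rw [degree_C_mul hr]
  have hlt : degree (derivative p) < degree (C r * p) := by
    rw [hCrp]; exact degree_derivative_lt hp
  have hdeg : (derivative p - C r * p).degree = degree p := by
    rw [degree_sub_eq_right_of_degree_lt hlt, hCrp]
  have hq : derivative p - C r * p ≠ 0 := by
    intro h0
    rw [h0, degree_zero] at hdeg
    exact hp (degree_eq_bot.mp hdeg.symm)
  have hnd : (derivative p - C r * p).natDegree = p.natDegree :=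
    natDegree_eq_of_degree_eq (by rw [hdeg])
  have hcard := card_roots_le_sub p r hp hq
  rw [rr_card hp h] at hcard
  exact ⟨rr_of_card hq (by omega), hnd, hq⟩

noncomputable def D : Module.End ℝ (Polynomial ℝ) := Polynomial.derivative

lemma rr_applyOps (s : Multiset ℝ) :
    ∀ f : ℝ[X], RealRooted f → Multiset.card s ≤ f.natDegree →
      RealRooted ((aeval D (s.map (fun a => X - C a)).prod) f) ∧
      f.natDegree - Multiset.card s ≤ ((aeval D (s.map (fun a => X - C a)).prod) f).natDegree ∧
      ((aeval D (s.map (fun a => X - C a)).prod) f) ≠ 0 := by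
  induction s using Multiset.induction with
  | empty =>
    intro f hf _
    simp only [Multiset.map_zero, Multiset.prod_zero, map_one, Module.End.one_apply]
    exact ⟨hf, by simp, rr_ne_zero hf⟩
  | cons a s IH =>
    intro f hf hcard
    rw [Multiset.card_cons] at hcard
    obtain ⟨hg1, hg2, hg3⟩ := IH f hf (by omega)
    set g := (aeval D (s.map (fun a => X - C a)).prod) f with hgdef
    have key : (aeval D ((a ::ₘ s).map (fun a => X - C a)).prod) f
        = derivative g - C a * g := by
      rw [Multiset.map_cons, Multiset.prod_cons, map_mul, Module.End.mul_apply]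
      rw [map_sub, aeval_X, aeval_C, Algebra.algebraMap_eq_smul_one]
      show D g - (a • (1 : Module.End ℝ (Polynomial ℝ))) g = _
      rw [LinearMap.smul_apply, Module.End.one_apply, smul_eq_C_mul]
      rfl
    rw [key, Multiset.card_cons]
    rcases eq_or_ne a 0 with rfl | ha
    · have hgpos : 0 < g.natDegree := by omega
      obtain ⟨h1, h2, h3⟩ := rr_deriv hg1 hgpos
      simp only [map_zero, zero_mul, sub_zero]
      exact ⟨h1, by omega, h3⟩
    · obtain ⟨h1, h2, h3⟩ := rr_sub hg1 hg3 ha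
      exact ⟨h1, by omega, h3⟩

noncomputable def revp (p : ℝ[X]) : ℝ[X] :=
  ∑ j ∈ range (p.natDegree + 1), C (p.coeff (p.natDegree - j)) * X ^ j

lemma revp_coeff {p : ℝ[X]} (j : ℕ) (hj : j ≤ p.natDegree) :
    (revp p).coeff j = p.coeff (p.natDegree - j) := by
  rw [revp, finset_sum_coeff]
  rw [Finset.sum_eq_single j]
  · simp
  · intro b _ hbj
    simp [coeff_C_mul, coeff_X_pow, hbj, Ne.symm hbj]
  · intro hj'
    simp at hj'
    omega

lemma revp_natDegree_le {p : ℝ[X]} : (revp p).natDegree ≤ p.natDegree :=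
  natDegree_sum_le_of_forall_le _ _ fun j hj => by
    apply (natDegree_C_mul_le _ _).trans
    simp at hj ⊢
    omega

lemma revp_ne_zero {p : ℝ[X]} (hp : p ≠ 0) : revp p ≠ 0 := by
  intro h0
  have := revp_coeff (p := p) 0 (Nat.zero_le _)
  rw [h0] at this
  simp at this
  exact hp (leadingCoeff_eq_zero.mp this.symm)

lemma rr_revp {p : ℝ[X]} (h : RealRooted p) : RealRooted (revp p) := by
  intro z hz
  rcases eq_or_ne z 0 with rfl | hz0
  · simp
  set n := p.natDegree with hn
  have hzq : (aeval z) (revp p) =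
      ∑ j ∈ range (n + 1), ((p.coeff (n - j) : ℂ)) * z ^ j := by
    rw [revp, map_sum]
    refine Finset.sum_congr rfl fun j _ => ?_
    simp [Complex.coe_algebraMap]
    exact Or.inl rfl
  set w := z⁻¹ with hw
  have hkey : ∑ j ∈ range (n + 1), ((p.coeff (n - j) : ℂ)) * z ^ j
      = z ^ n * aeval w p := by
    have hr := Finset.sum_range_reflect
      (fun j => ((p.coeff j : ℂ)) * z ^ (n - j)) (n + 1)
    simp only [Nat.add_sub_cancel] at hr
    have hstep : ∑ j ∈ range (n + 1), ((p.coeff (n - j) : ℂ)) * z ^ j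
        = ∑ j ∈ range (n + 1), ((p.coeff (n - j) : ℂ)) * z ^ (n - (n - j)) := by
      refine Finset.sum_congr rfl fun j hj => ?_
      rw [Nat.sub_sub_self (by simp at hj; omega)]
    rw [hstep, hr]
    rw [aeval_eq_sum_range, Finset.mul_sum]
    refine Finset.sum_congr rfl fun j hj => ?_
    simp only [Algebra.smul_def, Complex.coe_algebraMap]
    have hj' : j ≤ n := by simp at hj; omega
    have : z ^ (n - j) = z ^ n * w ^ j := by
      rw [hw, inv_pow, eq_comm, mul_inv_eq_iff_eq_mul₀ (pow_ne_zero _ hz0),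
        ← pow_add]
      congr 1
      omega
    rw [this]
    ring
  rw [hzq, hkey] at hz
  have hw0 : aeval w p = 0 := by
    rcases mul_eq_zero.mp hz with h0 | h0
    · exact absurd h0 (pow_ne_zero _ hz0)
    · exact h0
  have hwim := h w hw0
  have : z = w⁻¹ := by rw [hw, inv_inv]
  rw [this, Complex.inv_im, hwim]
  simp

noncomputable def rpoly (p : ℝ[X]) (a : ℕ) : ℝ[X] :=
  ∑ k ∈ range (p.natDegree + 1),
    C (p.coeff k * ((p.natDegree + a).descFactorial (p.natDegree - k) : ℝ)) * X ^ k

lemma g_eq (p : ℝ[X]) (a : ℕ) :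
    (aeval D (revp p)) (X ^ (p.natDegree + a)) = X ^ a * rpoly p a := by
  set n := p.natDegree with hn
  set q := revp p with hq
  set f : ℝ[X] := X ^ (n + a) with hf
  have h1 : aeval D q = ∑ j ∈ range (q.natDegree + 1), q.coeff j • D ^ j :=
    aeval_eq_sum_range _
  have h2 : (aeval D q) f = ∑ j ∈ range (q.natDegree + 1), q.coeff j • (derivative^[j] f) := by
    rw [h1, LinearMap.sum_apply]
    refine Finset.sum_congr rfl fun j _ => ?_
    rw [LinearMap.smul_apply, Module.End.pow_apply]
    rfl
  have h3 : (aeval D q) f = ∑ j ∈ range (n + 1), q.coeff j • (derivative^[j] f) := by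
    rw [h2]
    refine Finset.sum_subset (Finset.range_subset_range.mpr ?_) ?_
    · have h := revp_natDegree_le (p := p)
      rw [← hq] at h
      omega
    · intro j _ hj
      simp only [Finset.mem_range, not_lt] at hj
      rw [coeff_eq_zero_of_natDegree_lt (by omega), zero_smul]
  have h4 : (aeval D q) f =
      ∑ j ∈ range (n + 1), p.coeff (n - j) •
        (((n + a).descFactorial j : ℝ) • X ^ (n + a - j)) := by
    rw [h3]
    refine Finset.sum_congr rfl fun j hj => ?_
    simp only [Finset.mem_range] at hj
    rw [revp_coeff j (by omega), hf, iterate_derivative_X_pow_eq_smul]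
  have h5 : (aeval D q) f =
      ∑ k ∈ range (n + 1), p.coeff k •
        (((n + a).descFactorial (n - k) : ℝ) • X ^ (a + k)) := by
    rw [h4]
    have hr := Finset.sum_range_reflect
      (fun k => p.coeff k • (((n + a).descFactorial (n - k) : ℝ) • (X ^ (a + k) : ℝ[X]))) (n + 1)
    simp only [Nat.add_sub_cancel] at hr
    rw [← hr]
    refine Finset.sum_congr rfl fun j hj => ?_
    simp only [Finset.mem_range] at hj
    have hj' : j ≤ n := by omega
    have he : n + a - j = a + (n - j) := by omega
    rw [Nat.sub_sub_self hj', he]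
  rw [h5, rpoly, Finset.mul_sum]
  refine Finset.sum_congr rfl fun k hk => ?_
  rw [smul_smul, smul_eq_C_mul, ← hn]
  rw [show (X : ℝ[X]) ^ a * (C (p.coeff k * ((n + a).descFactorial (n - k) : ℝ)) * X ^ k)
    = C (p.coeff k * ((n + a).descFactorial (n - k) : ℝ)) * X ^ (a + k) by rw [pow_add]; ring]

lemma prodfact : ∀ (t k : ℕ), k.factorial * ∏ i ∈ range t, (k + 1 + i) = (k + t).factorial := by
  intro t
  induction t with
  | zero => simp
  | succ t IH =>
    intro k
    rw [Finset.prod_range_succ, ← mul_assoc, IH k]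
    rw [show k + (t + 1) = (k + t) + 1 by omega, Nat.factorial_succ]
    ring

lemma natkey (a n k : ℕ) (ha : 0 < a) (hk : k ≤ n) :
    (n + a).descFactorial (n - k) *
      ((∏ i ∈ range (a - 1), (k + 1 + i)) * ((k + a) * k.factorial)) =
      (n + a).factorial := by
  have h1 := prodfact (a - 1) k
  have h2 : (k + a) * (k + (a - 1)).factorial = (k + a).factorial := by
    rw [show k + a = (k + (a - 1)) + 1 by omega, Nat.factorial_succ]
  have h3 := Nat.factorial_mul_descFactorial (n := n + a) (k := n - k) (by omega)
  rw [show n + a - (n - k) = k + a by omega] at h3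
  have h4 : (∏ i ∈ range (a - 1), (k + 1 + i)) * ((k + a) * k.factorial)
      = (k + a).factorial := by
    calc (∏ i ∈ range (a - 1), (k + 1 + i)) * ((k + a) * k.factorial)
        = (k + a) * (k.factorial * ∏ i ∈ range (a - 1), (k + 1 + i)) := by ring
      _ = (k + a) * (k + (a - 1)).factorial := by rw [h1]
      _ = (k + a).factorial := h2
  rw [h4, mul_comm]
  exact h3

lemma rr_shift {h : ℝ[X]} (hh : RealRooted h) (c : ℕ) :
    RealRooted (X * derivative h + C ((c : ℝ) + 1) * h) := by
  have hne := rr_ne_zero hh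
  set u : ℝ[X] := X ^ (c + 1) * h with hu
  have hX : (X : ℝ[X]) ^ (c + 1) ≠ 0 := pow_ne_zero _ X_ne_zero
  have hu0 : u ≠ 0 := mul_ne_zero hX hne
  have hrru : RealRooted u := by
    intro z hz
    rw [hu, map_mul] at hz
    rcases mul_eq_zero.mp hz with h0 | h0
    · simp only [map_pow, aeval_X] at h0
      rw [pow_eq_zero_iff (by omega)] at h0
      simp [h0]
    · exact hh z h0
  have hdu : 0 < u.natDegree := by
    rw [hu, natDegree_mul hX hne, natDegree_X_pow]
    omega
  obtain ⟨h1, _, _⟩ := rr_deriv hrru hdu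
  have hder : derivative u = X ^ c * (X * derivative h + C ((c : ℝ) + 1) * h) := by
    rw [hu, derivative_mul, derivative_X_pow]
    push_cast
    ring
  intro z hz
  apply h1 z
  rw [hder, map_mul, hz, mul_zero]

lemma sum_C_mul_X_coeff (g : ℕ → ℝ) (N m : ℕ) :
    (∑ k ∈ range (N + 1), C (g k) * X ^ k).coeff m = if m ≤ N then g m else 0 := by
  rw [finset_sum_coeff]
  by_cases hm : m ≤ N
  · rw [Finset.sum_eq_single m]
    · simp [hm]
    · intro b _ hbm
      simp [coeff_C_mul, coeff_X_pow, Ne.symm hbm]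
    · intro hm'
      simp at hm'
      omega
  · rw [if_neg hm]
    refine Finset.sum_eq_zero fun b hb => ?_
    simp only [Finset.mem_range] at hb
    rw [coeff_C_mul, coeff_X_pow, if_neg (show ¬ m = b by omega), mul_zero]

lemma shift_coeff (h : ℝ[X]) (c : ℝ) (k : ℕ) :
    (X * derivative h + C c * h).coeff k = ((k : ℝ) + c) * h.coeff k := by
  rcases k with _ | k
  · rw [coeff_add, mul_coeff_zero, coeff_X_zero, coeff_C_mul]
    push_cast
    ring
  · rw [coeff_add, coeff_X_mul, coeff_derivative, coeff_C_mul]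
    push_cast
    ring

noncomputable def chain (r : ℝ[X]) : ℕ → ℝ[X]
  | 0 => r
  | j + 1 => X * derivative (chain r j) + C ((j : ℝ) + 1) * chain r j

lemma chain_coeff (r : ℝ[X]) (j k : ℕ) :
    (chain r j).coeff k = r.coeff k * ∏ i ∈ range j, ((k : ℝ) + i + 1) := by
  induction j with
  | zero => simp [chain]
  | succ j IH =>
    rw [show chain r (j + 1) = X * derivative (chain r j) + C ((j : ℝ) + 1) * chain r j from rfl]
    rw [shift_coeff, IH, Finset.prod_range_succ]
    ring

lemma chain_rr {r : ℝ[X]} (hr : RealRooted r) (j : ℕ) : RealRooted (chain r j) := by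
  induction j with
  | zero => exact hr
  | succ j IH => exact rr_shift IH j

end Lemmas

theorem inv_shifted_factorial_is_ms (a : ℕ) (ha : 0 < a) :
    IsMultiplierSequence (fun k => 1 / (((k : ℝ) + a) * k.factorial)) := by
  intro p hp
  have hpne := rr_ne_zero hp
  -- the reversed polynomial
  have hq_rr : RealRooted (revp p) := rr_revp hp
  have hq_ne : revp p ≠ 0 := revp_ne_zero hpne
  have hq_card : Multiset.card (revp p).roots = (revp p).natDegree := rr_card hq_ne hq_rr
  have hfact : C (revp p).leadingCoeff *
      (Multiset.map (fun b => X - C b) (revp p).roots).prod = revp p :=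
    C_leadingCoeff_mul_prod_multiset_X_sub_C hq_card
  -- the monomial
  have hf_rr : RealRooted (X ^ (p.natDegree + a) : ℝ[X]) := by
    intro z hz
    simp only [map_pow, aeval_X] at hz
    rw [pow_eq_zero_iff (by omega)] at hz
    simp [hz]
  have hcard_le : Multiset.card (revp p).roots ≤ (X ^ (p.natDegree + a) : ℝ[X]).natDegree := by
    rw [hq_card, natDegree_X_pow]
    have := revp_natDegree_le (p := p)
    omega
  obtain ⟨hg0_rr, -, -⟩ := rr_applyOps (revp p).roots (X ^ (p.natDegree + a)) hf_rr hcard_le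
  -- the polynomial g
  have hg_eq : (aeval D (revp p)) (X ^ (p.natDegree + a)) =
      (revp p).leadingCoeff •
        ((aeval D (Multiset.map (fun b => X - C b) (revp p).roots).prod)
          (X ^ (p.natDegree + a))) := by
    conv_lhs => rw [← hfact]
    rw [map_mul, aeval_C, Module.End.mul_apply, Algebra.algebraMap_eq_smul_one,
      LinearMap.smul_apply, Module.End.one_apply]
  have hlc : (revp p).leadingCoeff ≠ 0 := leadingCoeff_ne_zero.mpr hq_ne
  have hg_rr : RealRooted ((aeval D (revp p)) (X ^ (p.natDegree + a))) := by
    intro z hz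
    rw [hg_eq, smul_eq_C_mul, map_mul, aeval_C] at hz
    rcases mul_eq_zero.mp hz with h0 | h0
    · exact absurd h0 (by simpa using hlc)
    · exact hg0_rr z h0
  -- real-rootedness of rpoly
  have hr_rr : RealRooted (rpoly p a) := by
    intro z hz
    apply hg_rr z
    rw [g_eq, map_mul, hz, mul_zero]
  -- the chain
  have hF_rr : RealRooted (chain (rpoly p a) (a - 1)) := chain_rr hr_rr (a - 1)
  -- coefficient computation
  have hclaim : ∀ m, (chain (rpoly p a) (a - 1)).coeff m
      = (((p.natDegree + a).factorial : ℝ)) *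
        (applySeq (fun k => 1 / (((k : ℝ) + a) * k.factorial)) p).coeff m := by
    intro m
    rw [chain_coeff]
    have hr_co : (rpoly p a).coeff m
        = if m ≤ p.natDegree then
            p.coeff m * (((p.natDegree + a).descFactorial (p.natDegree - m) : ℝ)) else 0 :=
      sum_C_mul_X_coeff _ p.natDegree m
    have ha_co : (applySeq (fun k => 1 / (((k : ℝ) + a) * k.factorial)) p).coeff m
        = if m ≤ p.natDegree then
            (1 / (((m : ℝ) + a) * m.factorial)) * p.coeff m else 0 :=
      sum_C_mul_X_coeff _ p.natDegree m
    by_cases hm : m ≤ p.natDegree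
    · rw [hr_co, ha_co, if_pos hm, if_pos hm]
      have hkey := natkey a p.natDegree m ha hm
      have hprod : ∏ i ∈ range (a - 1), ((m : ℝ) + i + 1)
          = ∏ i ∈ range (a - 1), ((m : ℝ) + 1 + i) :=
        Finset.prod_congr rfl fun i _ => by ring
      rw [hprod]
      have hsc : (((p.natDegree + a).descFactorial (p.natDegree - m) : ℝ)) *
          (∏ i ∈ range (a - 1), ((m : ℝ) + 1 + i))
          = (((p.natDegree + a).factorial : ℝ)) * (1 / (((m : ℝ) + a) * m.factorial)) := by
        have hpos : ((m : ℝ) + a) * m.factorial ≠ 0 := by positivity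
        rw [mul_one_div, eq_div_iff hpos]
        have hcast := congrArg (fun x : ℕ => (x : ℝ)) hkey
        push_cast at hcast
        linear_combination hcast
      linear_combination (p.coeff m) * hsc
    · rw [hr_co, ha_co, if_neg hm, if_neg hm, zero_mul, mul_zero]
  have hFC : chain (rpoly p a) (a - 1)
      = C (((p.natDegree + a).factorial : ℝ)) *
        applySeq (fun k => 1 / (((k : ℝ) + a) * k.factorial)) p :=
    Polynomial.ext fun m => by rw [coeff_C_mul]; exact hclaim m
  intro z hz
  apply hF_rr z
  rw [hFC, map_mul, hz, mul_zero]
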